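/- Let X and Y be Banach spaces, let G ∈ L(X,Y) with ‖G‖ = 1, assume ‖·‖_G is a norm on L(X,Y), and let T ∈ L(X,Y) with ‖T‖_G = 1. The following are equivalent: (i) T is a smooth point of the unit ball of (L(X,Y), ‖·‖_G), i.e., there is exactly one functional φ ∈ L(X,Y)* with φ(T) = 1 and |φ(S)| ≤ ‖S‖_G for all S ∈ L(X,Y); (ii) the weak*-closure of { ψ_{x_α, y_α*} : (x_α, y_α*) ∈ 𝒜_G(T) } is a singleton {φ} with φ(T) = 1. -/

import Mathlib

open Filter Topology

universe u v w

variable {𝕜 : Type u} [RCLike 𝕜]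

/-- The `G`-norm of an operator `T`:
`‖T‖_G := inf_{δ>0} sup {‖Tx‖ : x ∈ S_X, ‖Gx‖ > 1 - δ}`. -/
noncomputable def Gnorm {X Y : Type*} [NormedAddCommGroup X] [NormedSpace 𝕜 X]
    [NormedAddCommGroup Y] [NormedSpace 𝕜 Y] (G T : X →L[𝕜] Y) : ℝ :=
  ⨅ δ : {δ : ℝ // 0 < δ},
    sSup {r : ℝ | ∃ x : X, ‖x‖ = 1 ∧ 1 - (δ : ℝ) < ‖G x‖ ∧ r = ‖T x‖}

/-- The weak*-closure of `{ψ_{x_α, y_α*} : (x_α, y_α*) ∈ 𝒜_G(T)}`: the set of all weak*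
limits of nets of functionals `ψ_{x_α, y_α*}` with `x_α ∈ S_X`, `y_α* ∈ S_{Y*}`,
`‖G x_α‖ → 1` and `y_α*(T x_α) → 1`. -/
def limAG {X : Type v} {Y : Type w} [NormedAddCommGroup X] [NormedSpace 𝕜 X]
    [NormedAddCommGroup Y] [NormedSpace 𝕜 Y] (G T : X →L[𝕜] Y) :
    Set ((X →L[𝕜] Y) →L[𝕜] 𝕜) :=
  {φ | ∃ (ι : Type (max u v w)) (l : Filter ι), l.NeBot ∧
    ∃ (x : ι → X) (y : ι → (Y →L[𝕜] 𝕜)),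
      (∀ i, ‖x i‖ = 1) ∧ (∀ i, ‖y i‖ = 1) ∧
      Tendsto (fun i => ‖G (x i)‖) l (𝓝 1) ∧
      Tendsto (fun i => (y i) (T (x i))) l (𝓝 1) ∧
      (∀ S : X →L[𝕜] Y, Tendsto (fun i => (y i) (S (x i))) l (𝓝 (φ S)))}

section helpers

variable {X : Type v} {Y : Type w}
  [NormedAddCommGroup X] [NormedSpace 𝕜 X] [NormedAddCommGroup Y] [NormedSpace 𝕜 Y]

/-- The set of values `‖S x‖` over unit vectors with `‖G x‖ > 1 - δ`. -/
def gset (G S : X →L[𝕜] Y) (δ : ℝ) : Set ℝ :=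
  {r : ℝ | ∃ x : X, ‖x‖ = 1 ∧ 1 - δ < ‖G x‖ ∧ r = ‖S x‖}

lemma Gnorm_eq (G S : X →L[𝕜] Y) :
    Gnorm G S = ⨅ δ : {δ : ℝ // 0 < δ}, sSup (gset G S (δ : ℝ)) := rfl

lemma gset_bddAbove (G S : X →L[𝕜] Y) (δ : ℝ) : BddAbove (gset G S δ) := by
  refine ⟨‖S‖, ?_⟩
  rintro r ⟨x, hx, -, rfl⟩
  calc ‖S x‖ ≤ ‖S‖ * ‖x‖ := S.le_opNorm x
  _ = ‖S‖ := by rw [hx, mul_one]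

lemma exists_unit (G : X →L[𝕜] Y) (hG : ‖G‖ = 1) {δ : ℝ} (hδ : 0 < δ) :
    ∃ x : X, ‖x‖ = 1 ∧ 1 - δ < ‖G x‖ := by
  set δ' : ℝ := min δ 1 with hδ'def
  have hδ'pos : 0 < δ' := lt_min hδ one_pos
  have h1 : (0:ℝ) ≤ 1 - δ' := by simp [hδ'def]
  have hlt : ¬ (‖G‖ ≤ 1 - δ') := by rw [hG]; linarith
  rw [ContinuousLinearMap.opNorm_le_iff h1] at hlt
  push_neg at hlt
  obtain ⟨x, hx⟩ := hlt
  have hx0 : x ≠ 0 := by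
    rintro rfl
    rw [norm_zero, mul_zero, map_zero, norm_zero] at hx
    exact lt_irrefl 0 hx
  have hxpos : 0 < ‖x‖ := norm_pos_iff.mpr hx0
  have hnc : ‖((‖x‖ : 𝕜)⁻¹)‖ = ‖x‖⁻¹ := by
    rw [norm_inv, RCLike.norm_ofReal, abs_norm]
  refine ⟨(‖x‖ : 𝕜)⁻¹ • x, ?_, ?_⟩
  · rw [norm_smul, hnc, inv_mul_cancel₀ (norm_ne_zero_iff.mpr hx0)]
  · rw [map_smul, norm_smul, hnc]
    have h2 : 1 - δ' < ‖x‖⁻¹ * ‖G x‖ := by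
      rw [lt_inv_mul_iff₀ hxpos, mul_comm]; exact hx
    have : δ' ≤ δ := min_le_left _ _
    linarith

lemma gset_nonempty (G S : X →L[𝕜] Y) (hG : ‖G‖ = 1) {δ : ℝ} (hδ : 0 < δ) :
    (gset G S δ).Nonempty := by
  obtain ⟨x, hx1, hx2⟩ := exists_unit G hG hδ
  exact ⟨‖S x‖, x, hx1, hx2, rfl⟩

lemma sSup_gset_nonneg (G S : X →L[𝕜] Y) (hG : ‖G‖ = 1) {δ : ℝ} (hδ : 0 < δ) :
    0 ≤ sSup (gset G S δ) := by
  obtain ⟨r, x, hx1, hx2, rfl⟩ := gset_nonempty G S hG hδ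
  exact le_trans (norm_nonneg _)
    (le_csSup (gset_bddAbove G S δ) (show ‖S x‖ ∈ gset G S δ from ⟨x, hx1, hx2, rfl⟩))

lemma Gnorm_le_sSup (G S : X →L[𝕜] Y) (hG : ‖G‖ = 1) {δ : ℝ} (hδ : 0 < δ) :
    Gnorm G S ≤ sSup (gset G S δ) := by
  rw [Gnorm_eq]
  have hbb : BddBelow (Set.range fun d : {d : ℝ // 0 < d} => sSup (gset G S (d : ℝ))) := by
    refine ⟨0, ?_⟩
    rintro r ⟨⟨δ', hδ'⟩, rfl⟩
    exact sSup_gset_nonneg G S hG hδ'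
  exact ciInf_le hbb ⟨δ, hδ⟩

lemma sSup_gset_mono (G S : X →L[𝕜] Y) (hG : ‖G‖ = 1) {δ₁ δ₂ : ℝ} (h1 : 0 < δ₁)
    (h : δ₁ ≤ δ₂) : sSup (gset G S δ₁) ≤ sSup (gset G S δ₂) :=
  csSup_le_csSup (gset_bddAbove G S δ₂) (gset_nonempty G S hG h1)
    (by rintro r ⟨x, hx1, hx2, rfl⟩; exact ⟨x, hx1, by linarith, rfl⟩)

/-- Every element of `limAG G T` is a norming functional. -/
lemma limAG_norming {G T : X →L[𝕜] Y} (hG : ‖G‖ = 1)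
    {φ : (X →L[𝕜] Y) →L[𝕜] 𝕜} (hφ : φ ∈ limAG G T) :
    φ T = 1 ∧ ∀ S : X →L[𝕜] Y, ‖φ S‖ ≤ Gnorm G S := by
  obtain ⟨ι, l, hl, x, y, hx, hy, hGx, hyT, hS⟩ := hφ
  refine ⟨tendsto_nhds_unique (hS T) hyT, fun S => ?_⟩
  rw [Gnorm_eq]
  refine le_ciInf ?_
  rintro ⟨δ, hδ⟩
  have hev : ∀ᶠ i in l, ‖y i (S (x i))‖ ≤ sSup (gset G S δ) := by
    have h1 : ∀ᶠ i in l, 1 - δ < ‖G (x i)‖ :=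
      hGx.eventually (eventually_gt_nhds (by linarith))
    filter_upwards [h1] with i hi
    calc ‖y i (S (x i))‖ ≤ ‖y i‖ * ‖S (x i)‖ := (y i).le_opNorm _
    _ = ‖S (x i)‖ := by rw [hy i, one_mul]
    _ ≤ sSup (gset G S δ) := le_csSup (gset_bddAbove G S δ) ⟨x i, hx i, hi, rfl⟩
  exact le_of_tendsto (hS S).norm hev

end helpers

section main

variable {X : Type v} {Y : Type w}
  [NormedAddCommGroup X] [NormedSpace 𝕜 X] [NormedAddCommGroup Y] [NormedSpace 𝕜 Y]

set_option maxHeartbeats 1000000 in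
lemma exists_limAG_ge {G T : X →L[𝕜] Y} (hG : ‖G‖ = 1) (hT : Gnorm G T = 1)
    (ψ : (X →L[𝕜] Y) →L[𝕜] 𝕜) (hψT : ψ T = 1) (hψ : ∀ S', ‖ψ S'‖ ≤ Gnorm G S')
    (S : X →L[𝕜] Y) :
    ∃ φ' ∈ limAG G T, RCLike.re (ψ S) ≤ RCLike.re (φ' S) := by
  classical
  set a : ℝ := RCLike.re (ψ S) with ha
  set t : ℕ → ℝ := fun n => 1 / (n + 1) with ht
  set ε : ℕ → ℝ := fun n => (1 / ((n : ℝ) + 1))^2 with hε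
  have htpos : ∀ n, 0 < t n := fun n => by positivity
  have hεpos : ∀ n, 0 < ε n := fun n => by positivity
  have hεt : ∀ n, ε n = t n * t n := fun n => by simp [ht, hε, sq]
  have htlim : Tendsto t atTop (𝓝 0) := tendsto_one_div_add_atTop_nhds_zero_nat
  have hεlim : Tendsto ε atTop (𝓝 0) := by
    have := htlim.mul htlim
    rw [mul_zero] at this
    exact this.congr fun n => (hεt n).symm
  -- choose δ n
  have hδex : ∀ n, ∃ δ : ℝ, 0 < δ ∧ δ ≤ t n ∧ sSup (gset G T δ) < 1 + ε n := by
    intro n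
    have h0 : Gnorm G T < 1 + ε n := by rw [hT]; linarith [hεpos n]
    rw [Gnorm_eq] at h0
    obtain ⟨⟨δ₀, hδ₀⟩, hlt⟩ := exists_lt_of_ciInf_lt h0
    refine ⟨min δ₀ (t n), lt_min hδ₀ (htpos n), min_le_right _ _, lt_of_le_of_lt ?_ hlt⟩
    exact sSup_gset_mono G T hG (lt_min hδ₀ (htpos n)) (min_le_left _ _)
  choose δ hδpos hδle hδsup using hδex
  have hδlim : Tendsto δ atTop (𝓝 0) :=
    tendsto_of_tendsto_of_tendsto_of_le_of_le' tendsto_const_nhds htlim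
      (Eventually.of_forall fun n => (hδpos n).le)
      (Eventually.of_forall fun n => hδle n)
  -- junk unit vectors
  obtain ⟨x₀, hx₀, hGx₀⟩ := exists_unit G hG one_pos
  have hGx₀0 : G x₀ ≠ 0 := by
    intro h; rw [h, norm_zero] at hGx₀; norm_num at hGx₀
  obtain ⟨y₀, hy₀, -⟩ := exists_dual_vector 𝕜 (G x₀) (norm_ne_zero_iff.mpr hGx₀0)
  set P : ℕ → Prop := fun n => 1/2 < 1 + t n * a - ε n with hP
  -- the per-n construction
  have hcons : ∀ n : ℕ, ∃ (x : X) (yd : Y →L[𝕜] 𝕜), ‖x‖ = 1 ∧ ‖yd‖ = 1 ∧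
      (P n → (1 - δ n < ‖G x‖ ∧
        yd ((T + ((t n : ℝ) : 𝕜) • S) x) = (‖(T + ((t n : ℝ) : 𝕜) • S) x‖ : 𝕜) ∧
        1 + t n * a - ε n < ‖(T + ((t n : ℝ) : 𝕜) • S) x‖)) := by
    intro n
    by_cases hPn : P n
    · set R : X →L[𝕜] Y := T + ((t n : ℝ) : 𝕜) • S with hR
      have key : 1 + t n * a ≤ sSup (gset G R (δ n)) := by
        have h1 : 1 + t n * a = RCLike.re (ψ R) := by
          rw [hR, map_add, map_smul, smul_eq_mul, map_add, RCLike.re_ofReal_mul, hψT,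
            RCLike.one_re]
        have h2 : RCLike.re (ψ R) ≤ ‖ψ R‖ := RCLike.re_le_norm _
        have h3 : ‖ψ R‖ ≤ Gnorm G R := hψ R
        have h4 := Gnorm_le_sSup G R hG (hδpos n)
        linarith
      have hlt2 : 1 + t n * a - ε n < sSup (gset G R (δ n)) :=
        lt_of_lt_of_le (by linarith [hεpos n]) key
      obtain ⟨r, ⟨x, hx1, hx2, rfl⟩, hr⟩ :=
        exists_lt_of_lt_csSup (gset_nonempty G R hG (hδpos n)) hlt2
      have hv0 : R x ≠ 0 := by
        intro h
        rw [h, norm_zero] at hr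
        have hPn' : 1/2 < 1 + t n * a - ε n := hPn
        linarith
      obtain ⟨yd, hyd, hydv⟩ := exists_dual_vector 𝕜 (R x) (norm_ne_zero_iff.mpr hv0)
      exact ⟨x, yd, hx1, hyd, fun _ => ⟨hx2, hydv, hr⟩⟩
    · exact ⟨x₀, y₀, hx₀, hy₀, fun h => absurd h hPn⟩
  choose xs ys hxs hys hgood using hcons
  -- notation for v
  set v : ℕ → Y := fun n => (T + ((t n : ℝ) : 𝕜) • S) (xs n) with hv
  -- ultrafilter
  set U : Ultrafilter ℕ := Ultrafilter.of atTop with hUdef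
  have hUle : (U : Filter ℕ) ≤ atTop := Ultrafilter.of_le _
  have hexlim : ∀ S' : X →L[𝕜] Y, ∃ z : 𝕜,
      Tendsto (fun n => ys n (S' (xs n))) (U : Filter ℕ) (𝓝 z) := by
    intro S'
    have hball : ∀ n, ys n (S' (xs n)) ∈ Metric.closedBall (0:𝕜) ‖S'‖ := by
      intro n
      rw [Metric.mem_closedBall, dist_zero_right]
      calc ‖ys n (S' (xs n))‖ ≤ ‖ys n‖ * ‖S' (xs n)‖ := (ys n).le_opNorm _
      _ = ‖S' (xs n)‖ := by rw [hys n, one_mul]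
      _ ≤ ‖S'‖ * ‖xs n‖ := S'.le_opNorm _
      _ = ‖S'‖ := by rw [hxs n, mul_one]
    obtain ⟨z, -, hz⟩ := (isCompact_closedBall (0:𝕜) ‖S'‖).ultrafilter_le_nhds
      (U.map (fun n => ys n (S' (xs n)))) (by
        rw [Ultrafilter.coe_map, le_principal_iff, mem_map]
        exact univ_mem' hball)
    rw [Ultrafilter.coe_map] at hz
    exact ⟨z, hz⟩
  choose L hL using hexlim
  have hLadd : ∀ S₁ S₂, L (S₁ + S₂) = L S₁ + L S₂ := by
    intro S₁ S₂
    refine tendsto_nhds_unique (hL (S₁ + S₂)) (((hL S₁).add (hL S₂)).congr fun n => ?_)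
    simp [ContinuousLinearMap.add_apply, map_add]
  have hLsmul : ∀ (c : 𝕜) (S' : X →L[𝕜] Y), L (c • S') = c * L S' := by
    intro c S'
    refine tendsto_nhds_unique (hL (c • S')) (((hL S').const_mul c).congr fun n => ?_)
    simp [ContinuousLinearMap.smul_apply, map_smul, smul_eq_mul]
  have hLbound : ∀ S', ‖L S'‖ ≤ 1 * ‖S'‖ := by
    intro S'
    rw [one_mul]
    refine le_of_tendsto (hL S').norm (Eventually.of_forall fun n => ?_)
    calc ‖ys n (S' (xs n))‖ ≤ ‖ys n‖ * ‖S' (xs n)‖ := (ys n).le_opNorm _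
    _ = ‖S' (xs n)‖ := by rw [hys n, one_mul]
    _ ≤ ‖S'‖ * ‖xs n‖ := S'.le_opNorm _
    _ = ‖S'‖ := by rw [hxs n, mul_one]
  set φ' : (X →L[𝕜] Y) →L[𝕜] 𝕜 :=
    LinearMap.mkContinuous
      { toFun := L, map_add' := hLadd,
        map_smul' := fun c S' => by
          rw [RingHom.id_apply, smul_eq_mul]; exact hLsmul c S' } 1 hLbound with hφ'def
  have hφ'app : ∀ S', φ' S' = L S' := fun _ => rfl
  -- eventual facts
  have hPev : ∀ᶠ n in atTop, P n := by
    have h1 : Tendsto (fun n => 1 + t n * a - ε n) atTop (𝓝 (1 + 0 * a - 0)) :=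
      ((htlim.mul_const a).const_add 1).sub hεlim
    have h1' : (1:ℝ) + 0 * a - 0 = 1 := by ring
    rw [h1'] at h1
    exact h1.eventually (eventually_gt_nhds (by norm_num))
  have hPU : ∀ᶠ n in (U : Filter ℕ), P n := hPev.filter_mono hUle
  have hTub : ∀ n, P n → ‖T (xs n)‖ ≤ 1 + ε n := by
    intro n hPn
    refine le_trans (le_csSup (gset_bddAbove G T (δ n))
      (show ‖T (xs n)‖ ∈ gset G T (δ n) from ⟨xs n, hxs n, (hgood n hPn).1, rfl⟩))
      (hδsup n).le
  have htknorm : ∀ n, ‖((t n : ℝ) : 𝕜)‖ = t n := by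
    intro n
    rw [RCLike.norm_ofReal, abs_of_pos (htpos n)]
  have hvub : ∀ n, P n → ‖v n‖ ≤ 1 + ε n + t n * ‖S‖ := by
    intro n hPn
    have h1 : ‖v n‖ ≤ ‖T (xs n)‖ + ‖((t n : ℝ) : 𝕜) • S (xs n)‖ := by
      rw [hv]
      simp only [ContinuousLinearMap.add_apply, ContinuousLinearMap.smul_apply]
      exact norm_add_le _ _
    have h2 : ‖((t n : ℝ) : 𝕜) • S (xs n)‖ ≤ t n * ‖S‖ := by
      rw [norm_smul, htknorm n]
      refine mul_le_mul_of_nonneg_left ?_ (htpos n).le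
      calc ‖S (xs n)‖ ≤ ‖S‖ * ‖xs n‖ := S.le_opNorm _
      _ = ‖S‖ := by rw [hxs n, mul_one]
    linarith [hTub n hPn]
  have hvnorm : Tendsto (fun n => ‖v n‖) (U : Filter ℕ) (𝓝 1) := by
    refine tendsto_of_tendsto_of_tendsto_of_le_of_le'
      (g := fun n => 1 + t n * a - ε n) (h := fun n => 1 + ε n + t n * ‖S‖) ?_ ?_ ?_ ?_
    · have h1 : Tendsto (fun n => 1 + t n * a - ε n) atTop (𝓝 (1 + 0 * a - 0)) :=
        ((htlim.mul_const a).const_add 1).sub hεlim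
      have h1' : (1:ℝ) + 0 * a - 0 = 1 := by ring
      rw [h1'] at h1
      exact h1.mono_left hUle
    · have := (hεlim.const_add 1).add (htlim.mul_const ‖S‖)
      have h2 : (1 : ℝ) + 0 + 0 * ‖S‖ = 1 := by ring
      rw [h2] at this
      exact (this.congr fun n => by ring).mono_left hUle
    · filter_upwards [hPU] with n hPn
      exact ((hgood n hPn).2.2).le
    · filter_upwards [hPU] with n hPn
      exact hvub n hPn
  -- L1
  have hL1 : Tendsto (fun n => ‖G (xs n)‖) (U : Filter ℕ) (𝓝 1) := by
    refine tendsto_of_tendsto_of_tendsto_of_le_of_le'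
      (g := fun n => 1 - δ n) (h := fun n => 1) ?_ tendsto_const_nhds ?_ ?_
    · have := hδlim.const_sub 1
      rw [sub_zero] at this
      exact this.mono_left hUle
    · filter_upwards [hPU] with n hPn
      exact ((hgood n hPn).1).le
    · refine Eventually.of_forall fun n => ?_
      calc ‖G (xs n)‖ ≤ ‖G‖ * ‖xs n‖ := G.le_opNorm _
      _ = 1 := by rw [hG, hxs n, one_mul]
  -- L2
  have hL2 : Tendsto (fun n => ys n (T (xs n))) (U : Filter ℕ) (𝓝 1) := by
    have heq : ∀ᶠ n in (U : Filter ℕ),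
        ((‖v n‖ : ℝ) : 𝕜) - ((t n : ℝ) : 𝕜) * ys n (S (xs n)) = ys n (T (xs n)) := by
      filter_upwards [hPU] with n hPn
      have h1 : ys n (v n) = ((‖v n‖ : ℝ) : 𝕜) := (hgood n hPn).2.1
      have h2 : ys n (v n) = ys n (T (xs n)) + ((t n : ℝ) : 𝕜) * ys n (S (xs n)) := by
        rw [hv]
        simp [ContinuousLinearMap.add_apply, ContinuousLinearMap.smul_apply, map_add,
          map_smul, smul_eq_mul]
      rw [h1] at h2
      rw [h2]
      ring
    have hmain : Tendsto (fun n => ((‖v n‖ : ℝ) : 𝕜) - ((t n : ℝ) : 𝕜) * ys n (S (xs n)))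
        (U : Filter ℕ) (𝓝 1) := by
      have hpart1 : Tendsto (fun n => ((‖v n‖ : ℝ) : 𝕜)) (U : Filter ℕ) (𝓝 1) := by
        have := ((RCLike.continuous_ofReal (K := 𝕜)).tendsto (1 : ℝ)).comp hvnorm
        rw [RCLike.ofReal_one] at this; exact this
      have hpart2 : Tendsto (fun n => ((t n : ℝ) : 𝕜) * ys n (S (xs n)))
          (U : Filter ℕ) (𝓝 0) := by
        have hts : Tendsto (fun n => t n * ‖S‖) (U : Filter ℕ) (𝓝 0) := by
          have h := htlim.mul_const ‖S‖
          rw [zero_mul] at h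
          exact h.mono_left hUle
        refine squeeze_zero_norm' ?_ hts
        · refine Eventually.of_forall fun n => ?_
          rw [norm_mul, htknorm n]
          refine mul_le_mul_of_nonneg_left ?_ (htpos n).le
          calc ‖ys n (S (xs n))‖ ≤ ‖ys n‖ * ‖S (xs n)‖ := (ys n).le_opNorm _
          _ = ‖S (xs n)‖ := by rw [hys n, one_mul]
          _ ≤ ‖S‖ * ‖xs n‖ := S.le_opNorm _
          _ = ‖S‖ := by rw [hxs n, mul_one]
      have := hpart1.sub hpart2
      rwa [sub_zero] at this
    exact hmain.congr' heq
  -- L4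
  have hL4 : a ≤ RCLike.re (L S) := by
    have hd4 : ∀ᶠ n in (U : Filter ℕ), a - 2 * t n ≤ RCLike.re (ys n (S (xs n))) := by
      filter_upwards [hPU] with n hPn
      have h1 : ys n (v n) = ((‖v n‖ : ℝ) : 𝕜) := (hgood n hPn).2.1
      have h2 : ys n (v n) = ys n (T (xs n)) + ((t n : ℝ) : 𝕜) * ys n (S (xs n)) := by
        rw [hv]
        simp [ContinuousLinearMap.add_apply, ContinuousLinearMap.smul_apply, map_add,
          map_smul, smul_eq_mul]
      have h3 : ‖v n‖ = RCLike.re (ys n (T (xs n))) + t n * RCLike.re (ys n (S (xs n))) := by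
        have := congrArg RCLike.re (h1.symm.trans h2)
        rwa [RCLike.ofReal_re, map_add, RCLike.re_ofReal_mul] at this
      have h4 : RCLike.re (ys n (T (xs n))) ≤ 1 + ε n := by
        refine le_trans (RCLike.re_le_norm _) ?_
        calc ‖ys n (T (xs n))‖ ≤ ‖ys n‖ * ‖T (xs n)‖ := (ys n).le_opNorm _
        _ = ‖T (xs n)‖ := by rw [hys n, one_mul]
        _ ≤ 1 + ε n := hTub n hPn
      have h5 : 1 + t n * a - ε n < ‖v n‖ := (hgood n hPn).2.2
      have h6 : t n * a - 2 * ε n ≤ t n * RCLike.re (ys n (S (xs n))) := by linarith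
      rw [hεt n] at h6
      have h7 := htpos n
      nlinarith
    have hre : Tendsto (fun n => RCLike.re (ys n (S (xs n)))) (U : Filter ℕ)
        (𝓝 (RCLike.re (L S))) := ((RCLike.continuous_re (K := 𝕜)).tendsto _).comp (hL S)
    have hconst : Tendsto (fun n => a - 2 * t n) (U : Filter ℕ) (𝓝 a) := by
      have := (htlim.const_mul 2).const_sub a
      rw [mul_zero, sub_zero] at this
      exact this.mono_left hUle
    exact le_of_tendsto_of_tendsto hconst hre hd4
  -- assemble
  refine ⟨φ', ⟨ULift.{max u v w} ℕ, Filter.map ULift.up (U : Filter ℕ), Filter.map_neBot,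
    fun i => xs i.down, fun i => ys i.down, fun i => hxs _, fun i => hys _, ?_, ?_, ?_⟩, ?_⟩
  · rw [Filter.tendsto_map'_iff]; exact hL1
  · rw [Filter.tendsto_map'_iff]; exact hL2
  · intro S'
    rw [Filter.tendsto_map'_iff, hφ'app]
    exact hL S'
  · rw [hφ'app]; exact hL4

end main

/-- Smoothness criterion for the `G`-norm: `T` with `‖T‖_G = 1` is a smooth point of the
unit ball of `(L(X,Y), ‖·‖_G)` (i.e. it has exactly one norming functional) if and only
if the weak*-closure of `{ψ_{x_α, y_α*} : (x_α, y_α*) ∈ 𝒜_G(T)}` is a singleton `{φ}`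
with `φ(T) = 1`. -/
theorem stmt_16 {X : Type v} {Y : Type w}
    [NormedAddCommGroup X] [NormedSpace 𝕜 X] [CompleteSpace X]
    [NormedAddCommGroup Y] [NormedSpace 𝕜 Y] [CompleteSpace Y]
    (G : X →L[𝕜] Y) (hG : ‖G‖ = 1)
    (hGnorm : ∀ S : X →L[𝕜] Y, Gnorm G S = 0 → S = 0)
    (T : X →L[𝕜] Y) (hT : Gnorm G T = 1) :
    (∃! φ : (X →L[𝕜] Y) →L[𝕜] 𝕜,
        φ T = 1 ∧ ∀ S : X →L[𝕜] Y, ‖φ S‖ ≤ Gnorm G S) ↔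
      (∃ φ : (X →L[𝕜] Y) →L[𝕜] 𝕜, limAG G T = {φ} ∧ φ T = 1) := by
  constructor
  · rintro ⟨φ, ⟨hφT, hφle⟩, huniq⟩
    obtain ⟨φ', hφ'mem, -⟩ := exists_limAG_ge hG hT φ hφT hφle 0
    have hkey : ∀ χ ∈ limAG G T, χ = φ := by
      intro χ hχ
      obtain ⟨hχT, hχle⟩ := limAG_norming hG hχ
      exact huniq χ ⟨hχT, hχle⟩
    have hφmem : φ ∈ limAG G T := (hkey φ' hφ'mem) ▸ hφ'mem
    refine ⟨φ, ?_, hφT⟩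
    ext χ
    simp only [Set.mem_singleton_iff]
    exact ⟨fun h => hkey χ h, fun h => h ▸ hφmem⟩
  · rintro ⟨φ, hsing, hφT⟩
    have hφmem : φ ∈ limAG G T := by rw [hsing]; rfl
    obtain ⟨-, hφle⟩ := limAG_norming hG hφmem
    refine ⟨φ, ⟨hφT, hφle⟩, ?_⟩
    rintro ψ ⟨hψT, hψle⟩
    have hre : ∀ S, RCLike.re (ψ S) ≤ RCLike.re (φ S) := by
      intro S
      obtain ⟨φ'', hφ''mem, hle⟩ := exists_limAG_ge hG hT ψ hψT hψle S
      have h : φ'' = φ := by rw [hsing] at hφ''mem; exact hφ''mem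
      rwa [h] at hle
    have hre' : ∀ S, RCLike.re (ψ S) = RCLike.re (φ S) := by
      intro S
      refine le_antisymm (hre S) ?_
      have h := hre (-S)
      rw [map_neg, map_neg, map_neg, map_neg] at h
      linarith
    have him : ∀ S, RCLike.im (ψ S) = RCLike.im (φ S) := by
      intro S
      have h := hre' ((RCLike.I : 𝕜) • S)
      rw [map_smul, smul_eq_mul, RCLike.I_mul_re, map_smul, smul_eq_mul,
        RCLike.I_mul_re] at h
      linarith
    ext S
    exact RCLike.ext_iff.mpr ⟨hre' S, him S⟩
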